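/- Let A ∈ ℝ₊^{r×s} have full column rank and x ∈ ℝ₊^r. Then the map (A', x') ↦ ‖x − A q(A', x')‖ is continuous at (A, x) on the set of full-column-rank nonnegative pairs; quantitatively, for (A', x') in suitable bounded neighborhoods, |‖x − A q(A',x')‖ − ‖x − A q(A,x)‖| ≤ 2(‖x − x'‖ + J₁J₂‖A − A'‖), where J₁ bounds the pseudoinverse norms of column-submatrices in the neighborhood and J₂ bounds ‖x'‖. -/

import Mathlib

open Matrix

/-- Moore–Penrose pseudoinverse of a full-column-rank real matrix. -/
noncomputable def pinv {m n : Type*} [Fintype m] [Fintype n] [DecidableEq n]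
    (A : Matrix m n ℝ) : Matrix n m ℝ := (Aᵀ * A)⁻¹ * Aᵀ

/-- Spectral (ℓ²-operator) norm of a real matrix. -/
noncomputable def specNorm {m n : Type*} [Fintype m] [Fintype n] [DecidableEq m]
    [DecidableEq n] (M : Matrix m n ℝ) : ℝ :=
  ‖LinearMap.toContinuousLinearMap (Matrix.toEuclideanLin M)‖

/-- Euclidean norm of a vector. -/
noncomputable def euclid {n : Type*} [Fintype n] (v : n → ℝ) : ℝ :=
  Real.sqrt (∑ i, v i ^ 2)

/-- `v` is the nonnegative least squares solution for `A`, `x`. -/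
def IsNNLS {r s : ℕ} (A : Matrix (Fin r) (Fin s) ℝ) (x : Fin r → ℝ) (v : Fin s → ℝ) : Prop :=
  (∀ j, 0 ≤ v j) ∧
    ∀ w : Fin s → ℝ, (∀ j, 0 ≤ w j) →
      ∑ i, (x i - A.mulVec v i) ^ 2 ≤ ∑ i, (x i - A.mulVec w i) ^ 2

namespace ResidualAux

lemma euclid_nonneg {n : Type*} [Fintype n] (v : n → ℝ) : 0 ≤ euclid v :=
  Real.sqrt_nonneg _

lemma euclid_eq_norm {n : Type*} [Fintype n] (v : n → ℝ) :
    euclid v = ‖(WithLp.equiv 2 (n → ℝ)).symm v‖ := by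
  rw [EuclideanSpace.norm_eq]
  simp only [euclid, WithLp.equiv_symm_apply, PiLp.toLp_apply, Real.norm_eq_abs, sq_abs]

lemma specNorm_nonneg {m n : Type*} [Fintype m] [Fintype n] [DecidableEq m] [DecidableEq n]
    (M : Matrix m n ℝ) : 0 ≤ specNorm M := norm_nonneg _

lemma specNorm_neg {m n : Type*} [Fintype m] [Fintype n] [DecidableEq m] [DecidableEq n]
    (M : Matrix m n ℝ) : specNorm (-M) = specNorm M := by
  simp [specNorm, map_neg]

lemma specNorm_zero {m n : Type*} [Fintype m] [Fintype n] [DecidableEq m] [DecidableEq n] :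
    specNorm (0 : Matrix m n ℝ) = 0 := by
  simp [specNorm, map_zero]

lemma euclid_mulVec_le {m n : Type*} [Fintype m] [Fintype n] [DecidableEq m] [DecidableEq n]
    (M : Matrix m n ℝ) (v : n → ℝ) :
    euclid (M.mulVec v) ≤ specNorm M * euclid v := by
  rw [euclid_eq_norm, euclid_eq_norm]
  exact (LinearMap.toContinuousLinearMap (Matrix.toEuclideanLin M)).le_opNorm
    ((WithLp.equiv 2 (n → ℝ)).symm v)

lemma sum_eq_sum_subtype {s : ℕ} (T : Finset (Fin s)) (f : Fin s → ℝ)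
    (hf : ∀ j ∉ T, f j = 0) :
    ∑ j, f j = ∑ j : {j // j ∈ T}, f j.val := by
  rw [Finset.sum_coe_sort T f]
  exact (Finset.sum_subset (Finset.subset_univ T) fun j _ hj => hf j hj).symm

lemma inj_of_rank {r s : ℕ} {A : Matrix (Fin r) (Fin s) ℝ} (h : A.rank = s) :
    Function.Injective A.mulVec := by
  have hker : LinearMap.ker A.mulVecLin = ⊥ := by
    have h1 := LinearMap.finrank_range_add_finrank_ker A.mulVecLin
    rw [Module.finrank_fin_fun] at h1
    have h0 : A.rank = Module.finrank ℝ (LinearMap.range A.mulVecLin) := rfl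
    have h2 : Module.finrank ℝ (LinearMap.ker A.mulVecLin) = 0 := by omega
    exact Submodule.finrank_eq_zero.mp h2
  intro u v huv
  exact LinearMap.ker_eq_bot.mp hker (by simpa [Matrix.mulVecLin_apply] using huv)

lemma gram_isUnit {r : ℕ} {k : Type*} [Fintype k] [DecidableEq k] {B : Matrix (Fin r) k ℝ}
    (h : Function.Injective B.mulVec) : IsUnit (Bᵀ * B) := by
  have hct : Bᴴ = Bᵀ := by ext i j; simp [Matrix.conjTranspose_apply]
  rw [← hct, ← Matrix.mulVec_injective_iff_isUnit]
  intro u v huv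
  apply h
  have h0 : (Bᴴ * B).mulVec (u - v) = 0 := by
    rw [Matrix.mulVec_sub, huv, sub_self]
  have h1 := (Matrix.conjTranspose_mul_self_mulVec_eq_zero B (u - v)).mp h0
  rw [Matrix.mulVec_sub] at h1
  exact sub_eq_zero.mp h1

lemma nnls_grad {r s : ℕ} {A : Matrix (Fin r) (Fin s) ℝ} {x : Fin r → ℝ} {q : Fin s → ℝ}
    (h : IsNNLS A x q) {j : Fin s} (hj : 0 < q j) :
    ∑ i, (x i - A.mulVec q i) * A i j = 0 := by
  set d := ∑ i, (x i - A.mulVec q i) * A i j with hd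
  set e := ∑ i, (A i j) ^ 2 with he
  have key : ∀ t : ℝ, |t| ≤ q j → 2 * t * d ≤ t ^ 2 * e := by
    intro t ht
    set w : Fin s → ℝ := q + t • (Pi.single j 1 : Fin s → ℝ) with hw
    have hw0 : ∀ k, 0 ≤ w k := by
      intro k
      rcases eq_or_ne k j with rfl | hk
      · have h1 : -q k ≤ t := neg_le_of_abs_le ht
        simp only [hw, Pi.add_apply, Pi.smul_apply, Pi.single_eq_same, smul_eq_mul, mul_one]
        linarith
      · simp [hw, Pi.single_eq_of_ne hk, h.1 k]
    have hwmv : ∀ i, A.mulVec w i = A.mulVec q i + t * A i j := by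
      intro i
      simp [hw, Matrix.mulVec_add, Matrix.mulVec_smul, Matrix.mulVec_single, mul_comm]
    have hs := h.2 w hw0
    have hexp : ∑ i, (x i - A.mulVec w i) ^ 2 =
        (∑ i, (x i - A.mulVec q i) ^ 2) - 2 * t * d + t ^ 2 * e := by
      rw [hd, he, Finset.mul_sum, Finset.mul_sum, ← Finset.sum_sub_distrib,
        ← Finset.sum_add_distrib]
      refine Finset.sum_congr rfl fun i _ => ?_
      rw [hwmv i]; ring
    rw [hexp] at hs
    linarith
  have he0 : 0 ≤ e := Finset.sum_nonneg fun i _ => sq_nonneg _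
  by_contra hd0
  have hdabs : 0 < |d| := abs_pos.mpr hd0
  have hd2 : 0 < d ^ 2 := by positivity
  set δ := min (q j / |d|) (1 / (e + 1)) with hδ
  have hδpos : 0 < δ := lt_min (div_pos hj hdabs) (by positivity)
  have hδ1 : δ * |d| ≤ q j := (le_div_iff₀ hdabs).mp (min_le_left _ _)
  have hδ2 : δ * e < 2 := by
    have h1 : δ * e ≤ (1 / (e + 1)) * e :=
      mul_le_mul_of_nonneg_right (min_le_right _ _) he0
    have h2 : (1 / (e + 1)) * e < 1 := by
      rw [div_mul_eq_mul_div, one_mul, div_lt_one (by linarith)]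
      linarith
    linarith
  have hkey := key (δ * d) (by rw [abs_mul, abs_of_pos hδpos]; exact hδ1)
  nlinarith [mul_pos hδpos hd2, mul_pos (show (0:ℝ) < 2 - δ * e by linarith)
    (mul_pos hδpos hd2)]

lemma nnls_euclid_le {r s : ℕ} {A : Matrix (Fin r) (Fin s) ℝ} {x : Fin r → ℝ}
    {q : Fin s → ℝ} (hq : IsNNLS A x q) (hrank : A.rank = s) {J₁ J₂ : ℝ}
    (hJ₁ : ∀ T : Finset (Fin s), T.Nonempty →
      specNorm (pinv (A.submatrix id (Subtype.val : {j // j ∈ T} → Fin s))) ≤ J₁)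
    (hJ₁0 : 0 ≤ J₁) (hx : euclid x ≤ J₂) : euclid q ≤ J₁ * J₂ := by
  classical
  have hJ₂0 : 0 ≤ J₂ := le_trans (euclid_nonneg x) hx
  set T : Finset (Fin s) := Finset.univ.filter (fun j => 0 < q j) with hT
  have hzero : ∀ j, j ∉ T → q j = 0 := by
    intro j hj
    have : ¬ 0 < q j := by simpa [hT] using hj
    exact le_antisymm (not_lt.mp this) (hq.1 j)
  by_cases hTne : T.Nonempty
  · set B : Matrix (Fin r) {j // j ∈ T} ℝ :=
      A.submatrix id (Subtype.val : {j // j ∈ T} → Fin s) with hB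
    set u : {j // j ∈ T} → ℝ := fun j => q j.val with hu
    have hmv : ∀ v : Fin s → ℝ, (∀ j ∉ T, v j = 0) →
        A.mulVec v = B.mulVec (fun j => v j.val) := by
      intro v hv
      funext i
      show ∑ j, A i j * v j = ∑ j : {j // j ∈ T}, B i j * v j.val
      exact sum_eq_sum_subtype T _ fun j hj => by rw [hv j hj, mul_zero]
    have hmvq : A.mulVec q = B.mulVec u := hmv q hzero
    -- normal equations
    have hne : (Bᵀ * B).mulVec u = Bᵀ.mulVec x := by
      funext j
      have hjq : 0 < q j.val := by
        exact (Finset.mem_filter.mp j.2).2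
      have hg := nnls_grad hq hjq
      rw [← Matrix.mulVec_mulVec, ← hmvq]
      show ∑ i, Bᵀ j i * A.mulVec q i = ∑ i, Bᵀ j i * x i
      have : ∀ i, Bᵀ j i = A i j.val := fun i => rfl
      simp only [this]
      have hg' : ∑ i, (x i * A i j.val - A.mulVec q i * A i j.val) = 0 := by
        rw [← hg]; exact Finset.sum_congr rfl fun i _ => by ring
      rw [Finset.sum_sub_distrib] at hg'
      have h1 : ∑ i, A i j.val * A.mulVec q i = ∑ i, A.mulVec q i * A i j.val :=
        Finset.sum_congr rfl fun i _ => mul_comm _ _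
      have h2 : ∑ i, A i j.val * x i = ∑ i, x i * A i j.val :=
        Finset.sum_congr rfl fun i _ => mul_comm _ _
      rw [h1, h2]; linarith
    -- B has injective mulVec
    have hAinj : Function.Injective A.mulVec := inj_of_rank hrank
    have hBinj : Function.Injective B.mulVec := by
      intro v1 v2 hv
      have ext0 : ∀ v : {j // j ∈ T} → ℝ,
          (fun j => (fun k => if h : k ∈ T then v ⟨k, h⟩ else 0) j.val) = v := by
        intro v; funext j; simp [j.2]
      have h1 : A.mulVec (fun k => if h : k ∈ T then v1 ⟨k, h⟩ else 0)
          = A.mulVec (fun k => if h : k ∈ T then v2 ⟨k, h⟩ else 0) := by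
        rw [hmv _ (fun j hj => by simp [hj]), hmv _ (fun j hj => by simp [hj]),
          ext0 v1, ext0 v2, hv]
      have h2 := hAinj h1
      funext j
      have := congrFun h2 j.val
      simpa [j.2] using this
    have hGu : IsUnit (Bᵀ * B) := gram_isUnit hBinj
    have hu_eq : u = (pinv B).mulVec x := by
      have h1 : (Bᵀ * B)⁻¹.mulVec ((Bᵀ * B).mulVec u)
          = (Bᵀ * B)⁻¹.mulVec (Bᵀ.mulVec x) := by rw [hne]
      rw [Matrix.mulVec_mulVec, Matrix.mulVec_mulVec,
        Matrix.nonsing_inv_mul _ ((Matrix.isUnit_iff_isUnit_det _).mp hGu),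
        Matrix.one_mulVec] at h1
      unfold pinv
      rw [h1, ← Matrix.mulVec_mulVec]
    have heq : euclid q = euclid u := by
      unfold euclid
      congr 1
      exact sum_eq_sum_subtype T _ fun j hj => by rw [hzero j hj]; ring
    rw [heq, hu_eq]
    calc euclid ((pinv B).mulVec x) ≤ specNorm (pinv B) * euclid x :=
          euclid_mulVec_le _ _
      _ ≤ J₁ * J₂ :=
          mul_le_mul (hJ₁ T hTne) hx (euclid_nonneg x) hJ₁0
  · have : euclid q = 0 := by
      have hq0 : ∀ j, q j = 0 := fun j =>
        hzero j (fun hj => hTne ⟨j, hj⟩)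
      simp [euclid, hq0]
    rw [this]
    exact mul_nonneg hJ₁0 hJ₂0

lemma euclid_sub_eq_norm {n : Type*} [Fintype n] (y z : n → ℝ) :
    euclid (fun i => y i - z i) =
      ‖(WithLp.equiv 2 (n → ℝ)).symm y - (WithLp.equiv 2 (n → ℝ)).symm z‖ := by
  rw [show (fun i => y i - z i) = y - z from rfl, euclid_eq_norm, WithLp.equiv_symm_apply, WithLp.toLp_sub]

lemma euclid_triangle {n : Type*} [Fintype n] (a b c : n → ℝ) :
    euclid (fun i => a i - c i) ≤
      euclid (fun i => a i - b i) + euclid (fun i => b i - c i) := by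
  rw [euclid_sub_eq_norm, euclid_sub_eq_norm, euclid_sub_eq_norm]
  have h := norm_add_le ((WithLp.equiv 2 (n → ℝ)).symm a - (WithLp.equiv 2 (n → ℝ)).symm b)
    ((WithLp.equiv 2 (n → ℝ)).symm b - (WithLp.equiv 2 (n → ℝ)).symm c)
  rwa [sub_add_sub_cancel] at h

lemma euclid_sub_comm {n : Type*} [Fintype n] (a b : n → ℝ) :
    euclid (fun i => a i - b i) = euclid (fun i => b i - a i) := by
  rw [euclid_sub_eq_norm, euclid_sub_eq_norm, norm_sub_rev]

end ResidualAux

open ResidualAux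

/-- continuity at `(A,x)` of `(A',x') ↦ ‖x − A q(A',x')‖` on the set of
full-column-rank nonnegative pairs, with the quantitative bound
`|‖x − A q(A',x')‖ − ‖x − A q(A,x)‖| ≤ 2(‖x − x'‖ + J₁J₂‖A − A'‖)` on suitable bounded
neighborhoods `N × N'`. -/
theorem residual_norm_continuous {r s : ℕ} (hrs : s ≤ r)
    (Q : (Fin r → Fin s → ℝ) → (Fin r → ℝ) → (Fin s → ℝ))
    (hQ : ∀ B y, (∀ i j, 0 ≤ B i j) → (∀ i, 0 ≤ y i) → (Matrix.of B).rank = s →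
      IsNNLS (Matrix.of B) y (Q B y))
    (A : Fin r → Fin s → ℝ) (hA0 : ∀ i j, 0 ≤ A i j) (hArank : (Matrix.of A).rank = s)
    (x : Fin r → ℝ) (hx0 : ∀ i, 0 ≤ x i)
    (D : Set ((Fin r → Fin s → ℝ) × (Fin r → ℝ)))
    (hD : D = {p | (∀ i j, 0 ≤ p.1 i j) ∧ (∀ i, 0 ≤ p.2 i) ∧ (Matrix.of p.1).rank = s})
    (N : Set (Fin r → Fin s → ℝ)) (hN : N ∈ nhds A) (hNbd : Bornology.IsBounded N)
    (hNcl : ∀ B ∈ closure N, (∀ i j, 0 ≤ B i j) ∧ (Matrix.of B).rank = s)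
    (N' : Set (Fin r → ℝ)) (hN' : N' ∈ nhds x) (hN'bd : Bornology.IsBounded N')
    (J₁ : ℝ)
    (hJ₁ : ∀ B ∈ closure N, ∀ T : Finset (Fin s), T.Nonempty →
      specNorm (pinv ((Matrix.of B).submatrix id
        (Subtype.val : {j // j ∈ T} → Fin s))) ≤ J₁)
    (J₂ : ℝ) (hJ₂ : ∀ x' ∈ N', euclid x' ≤ J₂) :
    ContinuousWithinAt
        (fun p : (Fin r → Fin s → ℝ) × (Fin r → ℝ) =>
          euclid (fun i => x i - (Matrix.of A).mulVec (Q p.1 p.2) i)) D (A, x) ∧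
      ∀ p ∈ (N ×ˢ N') ∩ D,
        |euclid (fun i => x i - (Matrix.of A).mulVec (Q p.1 p.2) i) -
            euclid (fun i => x i - (Matrix.of A).mulVec (Q A x) i)| ≤
          2 * (euclid (fun i => x i - p.2 i) +
            J₁ * J₂ * specNorm (Matrix.of A - Matrix.of p.1)) := by
  classical
  have hx_mem : x ∈ N' := mem_of_mem_nhds hN'
  have hA_mem : A ∈ N := mem_of_mem_nhds hN
  have hAcl : A ∈ closure N := subset_closure hA_mem
  have hJ₂0 : 0 ≤ J₂ := le_trans (euclid_nonneg x) (hJ₂ x hx_mem)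
  have hq : IsNNLS (Matrix.of A) x (Q A x) := hQ A x hA0 hx0 hArank
  have hsolbound : ∀ (B : Fin r → Fin s → ℝ) (y : Fin r → ℝ), B ∈ closure N → y ∈ N' →
      (Matrix.of B).rank = s → (∀ i j, 0 ≤ B i j) → (∀ i, 0 ≤ y i) →
      ∀ M : Matrix (Fin r) (Fin s) ℝ,
        euclid (M.mulVec (Q B y)) ≤ J₁ * J₂ * specNorm M := by
    intro B y hB hy hBrank hB0 hy0 M
    rcases Nat.eq_zero_or_pos s with hs | hs
    · subst hs
      have h1 : M.mulVec (Q B y) = 0 := by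
        funext i; simp [Matrix.mulVec, dotProduct]
      have h2 : specNorm M = 0 := by
        have h3 : LinearMap.toContinuousLinearMap (Matrix.toEuclideanLin M) = 0 := by
          ext v
          have hv : v = 0 := Subsingleton.elim v 0
          simp [hv]
        simp [specNorm, h3]
      simp [h1, h2, euclid]
    · have hJ₁0 : 0 ≤ J₁ := by
        have hne : ({⟨0, hs⟩} : Finset (Fin s)).Nonempty := Finset.singleton_nonempty _
        exact le_trans (specNorm_nonneg _) (hJ₁ A hAcl _ hne)
      have hqb : euclid (Q B y) ≤ J₁ * J₂ :=
        nnls_euclid_le (hQ B y hB0 hy0 hBrank) hBrank (fun T hT => hJ₁ B hB T hT) hJ₁0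
          (hJ₂ y hy)
      calc euclid (M.mulVec (Q B y)) ≤ specNorm M * euclid (Q B y) := euclid_mulVec_le _ _
        _ ≤ specNorm M * (J₁ * J₂) := mul_le_mul_of_nonneg_left hqb (specNorm_nonneg M)
        _ = J₁ * J₂ * specNorm M := by ring
  have key2 : ∀ p ∈ (N ×ˢ N') ∩ D,
      |euclid (fun i => x i - (Matrix.of A).mulVec (Q p.1 p.2) i) -
          euclid (fun i => x i - (Matrix.of A).mulVec (Q A x) i)| ≤
        2 * (euclid (fun i => x i - p.2 i) +
          J₁ * J₂ * specNorm (Matrix.of A - Matrix.of p.1)) := by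
    rintro ⟨A', x'⟩ ⟨hpN, hpD⟩
    obtain ⟨hA'N, hx'N⟩ : A' ∈ N ∧ x' ∈ N' := by
      simpa [Set.mem_prod] using hpN
    rw [hD] at hpD
    obtain ⟨hA'0, hx'0, hA'rank⟩ := hpD
    dsimp only
    set MA : Matrix (Fin r) (Fin s) ℝ := Matrix.of A with hMA
    set MA' : Matrix (Fin r) (Fin s) ℝ := Matrix.of A' with hMA'
    set q : Fin s → ℝ := Q A x with hqdef
    set q' : Fin s → ℝ := Q A' x' with hq'def
    have hq' : IsNNLS MA' x' q' := hQ A' x' hA'0 hx'0 hA'rank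
    have hd1 : euclid ((MA' - MA).mulVec q') ≤ J₁ * J₂ * specNorm (MA - MA') := by
      have h := hsolbound A' x' (subset_closure hA'N) hx'N hA'rank hA'0 hx'0 (MA' - MA)
      rwa [show specNorm (MA' - MA) = specNorm (MA - MA') by
        rw [← specNorm_neg (MA - MA'), neg_sub]] at h
    have hd2 : euclid ((MA - MA').mulVec q) ≤ J₁ * J₂ * specNorm (MA - MA') :=
      hsolbound A x hAcl hx_mem hArank hA0 hx0 (MA - MA')
    have ed1 : euclid (fun i => MA'.mulVec q' i - MA.mulVec q' i) ≤
        J₁ * J₂ * specNorm (MA - MA') := by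
      have hfe : (fun i => MA'.mulVec q' i - MA.mulVec q' i) = (MA' - MA).mulVec q' := by
        funext i; rw [Matrix.sub_mulVec]; rfl
      rw [hfe]; exact hd1
    have ed2 : euclid (fun i => MA.mulVec q i - MA'.mulVec q i) ≤
        J₁ * J₂ * specNorm (MA - MA') := by
      have hfe : (fun i => MA.mulVec q i - MA'.mulVec q i) = (MA - MA').mulVec q := by
        funext i; rw [Matrix.sub_mulVec]; rfl
      rw [hfe]; exact hd2
    have hmono1 : euclid (fun i => x i - MA.mulVec q i) ≤
        euclid (fun i => x i - MA.mulVec q' i) :=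
      Real.sqrt_le_sqrt (hq.2 q' hq'.1)
    have e2 : euclid (fun i => x' i - MA'.mulVec q' i) ≤
        euclid (fun i => x' i - MA'.mulVec q i) :=
      Real.sqrt_le_sqrt (hq'.2 q hq.1)
    have e1 : euclid (fun i => x i - MA.mulVec q' i) ≤
        euclid (fun i => x i - x' i) + euclid (fun i => x' i - MA'.mulVec q' i)
          + euclid (fun i => MA'.mulVec q' i - MA.mulVec q' i) := by
      have t1 := euclid_triangle x x' (MA.mulVec q')
      have t2 := euclid_triangle x' (MA'.mulVec q') (MA.mulVec q')
      linarith
    have e3 : euclid (fun i => x' i - MA'.mulVec q i) ≤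
        euclid (fun i => x' i - x i) + euclid (fun i => x i - MA.mulVec q i)
          + euclid (fun i => MA.mulVec q i - MA'.mulVec q i) := by
      have t1 := euclid_triangle x' x (MA'.mulVec q)
      have t2 := euclid_triangle x (MA.mulVec q) (MA'.mulVec q)
      linarith
    have ecomm : euclid (fun i => x' i - x i) = euclid (fun i => x i - x' i) :=
      euclid_sub_comm _ _
    rw [abs_of_nonneg (by linarith)]
    linarith
  refine ⟨?_, key2⟩
  have cont_euclid : Continuous (fun v : Fin r → ℝ => euclid v) := by
    unfold euclid
    exact Real.continuous_sqrt.comp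
      (continuous_finset_sum _ fun i _ => (continuous_apply i).pow 2)
  have cont_spec : Continuous (fun M : Matrix (Fin r) (Fin s) ℝ => specNorm M) := by
    have h1 := LinearMap.continuous_of_finiteDimensional
      ((LinearMap.toContinuousLinearMap :
          (EuclideanSpace ℝ (Fin s) →ₗ[ℝ] EuclideanSpace ℝ (Fin r)) ≃ₗ[ℝ]
            (EuclideanSpace ℝ (Fin s) →L[ℝ] EuclideanSpace ℝ (Fin r))).toLinearMap.comp
        (Matrix.toEuclideanLin :
          Matrix (Fin r) (Fin s) ℝ ≃ₗ[ℝ] _).toLinearMap)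
    exact h1.norm
  have hg : Continuous (fun p : (Fin r → Fin s → ℝ) × (Fin r → ℝ) =>
      2 * (euclid (fun i => x i - p.2 i) +
        J₁ * J₂ * specNorm (Matrix.of A - Matrix.of p.1))) := by
    apply continuous_const.mul
    apply Continuous.add
    · exact cont_euclid.comp
        (continuous_pi fun i => continuous_const.sub ((continuous_apply i).comp continuous_snd))
    · exact continuous_const.mul (cont_spec.comp (continuous_const.sub continuous_fst))
  unfold ContinuousWithinAt
  rw [← tendsto_sub_nhds_zero_iff]
  refine squeeze_zero_norm' (a := fun p : (Fin r → Fin s → ℝ) × (Fin r → ℝ) =>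
      2 * (euclid (fun i => x i - p.2 i) +
        J₁ * J₂ * specNorm (Matrix.of A - Matrix.of p.1))) ?_ ?_
  · filter_upwards [mem_nhdsWithin_of_mem_nhds (prod_mem_nhds hN hN'),
      self_mem_nhdsWithin] with p hp1 hp2
    rw [Real.norm_eq_abs]
    exact key2 p ⟨hp1, hp2⟩
  · have h0 : 2 * (euclid (fun i => x i - x i) +
        J₁ * J₂ * specNorm (Matrix.of A - Matrix.of A)) = 0 := by
      simp [euclid, sub_self, specNorm_zero]
    have h1 := (hg.tendsto (A, x)).mono_left
      (nhdsWithin_le_nhds : nhdsWithin (A, x) D ≤ nhds (A, x))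
    rwa [h0] at h1
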